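/- Let μ̃ be the bilinear skew-symmetric map on ℝ^7 with nonzero basis brackets [e1,e2]=-(√519593/2378)e3, [e1,e3]=(√377/58)e4, [e1,e4]=(3√605845438/252068)e5+(√126034/6148)e6, [e2,e3]=(√777722/6148)e5-(3√58406/6148)e6, [e2,e5]=(√126034/1189)e7, [e3,e4]=(3√13079/1189)e7. Then μ̃ satisfies the Jacobi identity, D = diag(1,2,3,4,5,5,7) is a derivation of (ℝ^7,μ̃), and m(μ̃) = -(43/58)·Id + (9/58)·D; in particular m(μ̃) = diag(-17/29,-25/58,-8/29,-7/58,1/29,1/29,10/29). -/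
import Mathlib


open Finset

noncomputable section

/-- `ℝ⁷` with its standard basis and standard inner product. -/
abbrev V7 : Type := Fin 7 → ℝ

/-- The standard basis vector `e i`. -/
def e (i : Fin 7) : V7 := Pi.single i 1

/-- The standard inner product on `ℝ⁷`. -/
def dot (x y : V7) : ℝ := ∑ i, x i * y i

/-- Structure constants built from a list of entries `(i, j, k, a)`, each meaning that
`μ (e i) (e j)` has component `a` along `e k` (and `μ (e j) (e i)` has component `-a`);
all unlisted basis brackets are `0`. -/
def toC (L : List (Fin 7 × Fin 7 × Fin 7 × ℝ)) (i j k : Fin 7) : ℝ :=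
  (L.map fun t =>
      (if t.1 = i ∧ t.2.1 = j ∧ t.2.2.1 = k then t.2.2.2 else 0)
    - (if t.1 = j ∧ t.2.1 = i ∧ t.2.2.1 = k then t.2.2.2 else 0)).sum

/-- The bilinear skew-symmetric map on `ℝ⁷` with structure constants `c`. -/
def br (c : Fin 7 → Fin 7 → Fin 7 → ℝ) (x y : V7) : V7 :=
  fun k => ∑ i, ∑ j, x i * y j * c i j k

lemma br_add_left (c : Fin 7 → Fin 7 → Fin 7 → ℝ) (x x' y : V7) :
    br c (x + x') y = br c x y + br c x' y := by
  funext k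
  simp only [br, Pi.add_apply, ← Finset.sum_add_distrib]
  exact Finset.sum_congr rfl fun i _ => Finset.sum_congr rfl fun j _ => by ring

lemma br_smul_left (c : Fin 7 → Fin 7 → Fin 7 → ℝ) (r : ℝ) (x y : V7) :
    br c (r • x) y = r • br c x y := by
  funext k
  simp only [br, Pi.smul_apply, smul_eq_mul, Finset.mul_sum]
  exact Finset.sum_congr rfl fun i _ => Finset.sum_congr rfl fun j _ => by ring

lemma br_add_right (c : Fin 7 → Fin 7 → Fin 7 → ℝ) (x y y' : V7) :
    br c x (y + y') = br c x y + br c x y' := by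
  funext k
  simp only [br, Pi.add_apply, ← Finset.sum_add_distrib]
  exact Finset.sum_congr rfl fun i _ => Finset.sum_congr rfl fun j _ => by ring

lemma br_smul_right (c : Fin 7 → Fin 7 → Fin 7 → ℝ) (r : ℝ) (x y : V7) :
    br c x (r • y) = r • br c x y := by
  funext k
  simp only [br, Pi.smul_apply, smul_eq_mul, Finset.mul_sum]
  exact Finset.sum_congr rfl fun i _ => Finset.sum_congr rfl fun j _ => by ring

lemma br_zero_left (c : Fin 7 → Fin 7 → Fin 7 → ℝ) (y : V7) : br c 0 y = 0 := by
  funext k; simp [br]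

lemma br_zero_right (c : Fin 7 → Fin 7 → Fin 7 → ℝ) (x : V7) : br c x 0 = 0 := by
  funext k; simp [br]

/-- The space of derivations of the algebra `(ℝ⁷, br c)`, i.e. the linear maps `D` with
`D (μ x y) = μ (D x) y + μ x (D y)` for all `x, y`, as a submodule of the endomorphisms. -/
def derivations (c : Fin 7 → Fin 7 → Fin 7 → ℝ) : Submodule ℝ (Module.End ℝ V7) where
  carrier := {D | ∀ x y, D (br c x y) = br c (D x) y + br c x (D y)}
  add_mem' := by
    intro D E hD hE x y
    simp only [LinearMap.add_apply, hD x y, hE x y, br_add_left, br_add_right]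
    abel
  zero_mem' := by
    intro x y
    simp [br_zero_left, br_zero_right]
  smul_mem' := by
    intro r D hD x y
    simp only [LinearMap.smul_apply, hD x y, smul_add, br_smul_left, br_smul_right]

/-- The Jacobi identity for the bracket `br c`. -/
def Jacobi (c : Fin 7 → Fin 7 → Fin 7 → ℝ) : Prop :=
  ∀ x y z : V7, br c (br c x y) z + br c (br c y z) x + br c (br c z x) y = 0

/-- Skew-symmetry of the bracket `br c`. -/
def Skew (c : Fin 7 → Fin 7 → Fin 7 → ℝ) : Prop :=
  ∀ x y : V7, br c x y = - br c y x

/-- The diagonal endomorphism `diag (a 1, …, a 7)` of `ℝ⁷`, `e i ↦ a i • e i`. -/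
def diagL (a : Fin 7 → ℝ) : Module.End ℝ V7 :=
  LinearMap.pi fun i => a i • LinearMap.proj i

/-- Structure constants of the bracket `μ̃`. -/
def c13 : Fin 7 → Fin 7 → Fin 7 → ℝ :=
  toC [(0, 1, 2, -(Real.sqrt 519593 / 2378)),
   (0, 2, 3, Real.sqrt 377 / 58),
   (0, 3, 4, 3 * Real.sqrt 605845438 / 252068),
   (0, 3, 5, Real.sqrt 126034 / 6148),
   (1, 2, 4, Real.sqrt 777722 / 6148),
   (1, 2, 5, -(3 * Real.sqrt 58406 / 6148)),
   (1, 4, 6, Real.sqrt 126034 / 1189),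
   (2, 3, 6, 3 * Real.sqrt 13079 / 1189)]


lemma mk0 (h : 0 < 7) : (⟨0, h⟩ : Fin 7) = 0 := rfl
lemma mk1 (h : 1 < 7) : (⟨1, h⟩ : Fin 7) = 1 := rfl
lemma mk2 (h : 2 < 7) : (⟨2, h⟩ : Fin 7) = 2 := rfl
lemma mk3 (h : 3 < 7) : (⟨3, h⟩ : Fin 7) = 3 := rfl
lemma mk4 (h : 4 < 7) : (⟨4, h⟩ : Fin 7) = 4 := rfl
lemma mk5 (h : 5 < 7) : (⟨5, h⟩ : Fin 7) = 5 := rfl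
lemma mk6 (h : 6 < 7) : (⟨6, h⟩ : Fin 7) = 6 := rfl

lemma sum_single (t1 t2 : Fin 7) (P : Prop) [Decidable P] (v : ℝ) (x y : V7) :
    ∑ i, ∑ j, x i * y j * (if t1 = i ∧ t2 = j ∧ P then v else 0)
      = if P then x t1 * y t2 * v else 0 := by
  by_cases hP : P <;>
    simp [hP, ite_and, mul_ite, Finset.sum_ite_eq]

lemma sum_single' (t1 t2 : Fin 7) (P : Prop) [Decidable P] (v : ℝ) (x y : V7) :
    ∑ i, ∑ j, x i * y j * (if t1 = j ∧ t2 = i ∧ P then v else 0)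
      = if P then x t2 * y t1 * v else 0 := by
  by_cases hP : P <;>
    simp [hP, ite_and, mul_ite, Finset.sum_ite_eq]

lemma toC_cons (t : Fin 7 × Fin 7 × Fin 7 × ℝ) (L : List (Fin 7 × Fin 7 × Fin 7 × ℝ))
    (i j k : Fin 7) :
    toC (t :: L) i j k =
      ((if t.1 = i ∧ t.2.1 = j ∧ t.2.2.1 = k then t.2.2.2 else 0)
        - (if t.1 = j ∧ t.2.1 = i ∧ t.2.2.1 = k then t.2.2.2 else 0)) + toC L i j k := by
  simp [toC]

lemma br_toC (L : List (Fin 7 × Fin 7 × Fin 7 × ℝ)) (x y : V7) (k : Fin 7) :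
    br (toC L) x y k =
      (L.map fun t => if t.2.2.1 = k then
          (x t.1 * y t.2.1 - x t.2.1 * y t.1) * t.2.2.2 else 0).sum := by
  induction L with
  | nil => simp [br, toC]
  | cons t L ih =>
      have h : br (toC (t :: L)) x y k
          = (∑ i, ∑ j, x i * y j * ((if t.1 = i ∧ t.2.1 = j ∧ t.2.2.1 = k then t.2.2.2 else 0)
              - (if t.1 = j ∧ t.2.1 = i ∧ t.2.2.1 = k then t.2.2.2 else 0)))
            + br (toC L) x y k := by
        simp only [br, toC_cons, mul_add, Finset.sum_add_distrib]
      rw [h, ih]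
      simp only [mul_sub, Finset.sum_sub_distrib, sum_single, sum_single', List.map_cons,
        List.sum_cons]
      by_cases hk : t.2.2.1 = k <;> simp [hk] <;> ring

lemma br_c13_0 (x y : V7) : br c13 x y 0 = 0 := by
  rw [c13, br_toC]; simp; try norm_num

lemma br_c13_1 (x y : V7) : br c13 x y 1 = 0 := by
  rw [c13, br_toC]; simp; try norm_num

lemma br_c13_2 (x y : V7) : br c13 x y 2 = (x 0 * y 1 - x 1 * y 0) * (-(Real.sqrt 519593 / 2378)) := by
  rw [c13, br_toC]; simp; try norm_num

lemma br_c13_3 (x y : V7) : br c13 x y 3 = (x 0 * y 2 - x 2 * y 0) * (Real.sqrt 377 / 58) := by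
  rw [c13, br_toC]; simp; try norm_num

lemma br_c13_4 (x y : V7) : br c13 x y 4 = (x 0 * y 3 - x 3 * y 0) * (3 * Real.sqrt 605845438 / 252068) + (x 1 * y 2 - x 2 * y 1) * (Real.sqrt 777722 / 6148) := by
  rw [c13, br_toC]; simp; try norm_num

lemma br_c13_5 (x y : V7) : br c13 x y 5 = (x 0 * y 3 - x 3 * y 0) * (Real.sqrt 126034 / 6148) + (x 1 * y 2 - x 2 * y 1) * (-(3 * Real.sqrt 58406 / 6148)) := by
  rw [c13, br_toC]; simp; try norm_num

lemma br_c13_6 (x y : V7) : br c13 x y 6 = (x 1 * y 4 - x 4 * y 1) * (Real.sqrt 126034 / 1189) + (x 2 * y 3 - x 3 * y 2) * (3 * Real.sqrt 13079 / 1189) := by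
  rw [c13, br_toC]; simp; try norm_num

lemma vec7_0 (a b c d f g h : ℝ) : ![a, b, c, d, f, g, h] 0 = a := rfl
lemma vec7_1 (a b c d f g h : ℝ) : ![a, b, c, d, f, g, h] 1 = b := rfl
lemma vec7_2 (a b c d f g h : ℝ) : ![a, b, c, d, f, g, h] 2 = c := rfl
lemma vec7_3 (a b c d f g h : ℝ) : ![a, b, c, d, f, g, h] 3 = d := rfl
lemma vec7_4 (a b c d f g h : ℝ) : ![a, b, c, d, f, g, h] 4 = f := rfl
lemma vec7_5 (a b c d f g h : ℝ) : ![a, b, c, d, f, g, h] 5 = g := rfl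
lemma vec7_6 (a b c d f g h : ℝ) : ![a, b, c, d, f, g, h] 6 = h := rfl

lemma dla (a : Fin 7 → ℝ) (x : V7) (i : Fin 7) : diagL a x i = a i * x i := rfl

lemma dot_e (x : V7) (q : Fin 7) : dot x (e q) = x q := by
  simp [dot, e, Pi.single_apply, mul_ite, Finset.sum_ite_eq']

lemma hs1 : Real.sqrt 519593 ^ 2 = 519593 := Real.sq_sqrt (by norm_num)
lemma hs2 : Real.sqrt 377 ^ 2 = 377 := Real.sq_sqrt (by norm_num)
lemma hs3 : Real.sqrt 605845438 ^ 2 = 605845438 := Real.sq_sqrt (by norm_num)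
lemma hs4 : Real.sqrt 126034 ^ 2 = 126034 := Real.sq_sqrt (by norm_num)
lemma hs5 : Real.sqrt 777722 ^ 2 = 777722 := Real.sq_sqrt (by norm_num)
lemma hs6 : Real.sqrt 58406 ^ 2 = 58406 := Real.sq_sqrt (by norm_num)
lemma hs7 : Real.sqrt 13079 ^ 2 = 13079 := Real.sq_sqrt (by norm_num)

lemma hp1 : Real.sqrt 519593 * Real.sqrt 13079 * 106 = Real.sqrt 605845438 * Real.sqrt 126034 := by
  rw [← Real.sqrt_mul (by norm_num) 13079, ← Real.sqrt_mul (by norm_num) 126034,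
    show (106 : ℝ) = Real.sqrt (106 ^ 2) by rw [Real.sqrt_sq] <;> norm_num,
    ← Real.sqrt_mul (by norm_num)]
  norm_num

lemma hp2 : Real.sqrt 777722 * Real.sqrt 58406 * 41 = Real.sqrt 605845438 * Real.sqrt 126034 := by
  rw [← Real.sqrt_mul (by norm_num) 58406, ← Real.sqrt_mul (by norm_num) 126034,
    show (41 : ℝ) = Real.sqrt (41 ^ 2) by rw [Real.sqrt_sq] <;> norm_num,
    ← Real.sqrt_mul (by norm_num)]
  norm_num

lemma skew13 : Skew c13 := by
  intro x y
  funext k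
  fin_cases k <;>
    simp only [mk0, mk1, mk2, mk3, mk4, mk5, mk6, Pi.neg_apply, br_c13_0, br_c13_1, br_c13_2, br_c13_3, br_c13_4, br_c13_5, br_c13_6] <;> ring

lemma jacobi13 : Jacobi c13 := by
  intro x y z
  funext k
  fin_cases k <;>
    simp only [mk0, mk1, mk2, mk3, mk4, mk5, mk6, Pi.add_apply, Pi.zero_apply, br_c13_0, br_c13_1, br_c13_2, br_c13_3, br_c13_4, br_c13_5, br_c13_6]
  · ring
  · ring
  · ring
  · ring
  · ring
  · ring
  · linear_combination ((3/299708852 : ℝ) * (-(x 0 * y 1 * z 3) + x 1 * y 0 * z 3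
      - x 3 * y 0 * z 1 + x 3 * y 1 * z 0 - x 1 * y 3 * z 0 + x 0 * y 3 * z 1)) * hp1

lemma deriv13 : diagL ![1, 2, 3, 4, 5, 5, 7] ∈ derivations c13 := by
  intro x y
  funext k
  fin_cases k <;>
    simp only [mk0, mk1, mk2, mk3, mk4, mk5, mk6, Pi.add_apply, dla, br_c13_0, br_c13_1, br_c13_2, br_c13_3, br_c13_4, br_c13_5, br_c13_6,
      vec7_0, vec7_1, vec7_2, vec7_3, vec7_4, vec7_5, vec7_6] <;> ring

lemma mdiag (m : Module.End ℝ V7)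
    (hm : ∀ x y : V7, dot (m x) y =
          -2 * ∑ i, ∑ j, dot (br c13 x (e i)) (e j) * dot (br c13 y (e i)) (e j)
          + ∑ i, ∑ j, dot (br c13 (e i) (e j)) x * dot (br c13 (e i) (e j)) y) :
    m = diagL ![-17/29, -25/58, -8/29, -7/58, 1/29, 1/29, 10/29] := by
  have hm' : ∀ (x : V7) (k : Fin 7), m x k =
      -2 * ∑ i, ∑ j, br c13 x (e i) j * br c13 (e k) (e i) j
        + ∑ i, ∑ j, dot (br c13 (e i) (e j)) x * br c13 (e i) (e j) k := by
    intro x k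
    have h := hm x (e k)
    simp only [dot_e] at h
    exact h
  apply LinearMap.ext
  intro x
  funext k
  rw [hm' x k, dla]
  fin_cases k
  all_goals simp only [mk0, mk1, mk2, mk3, mk4, mk5, mk6]
  all_goals simp [Fin.sum_univ_seven, br_c13_0, br_c13_1, br_c13_2, br_c13_3, br_c13_4, br_c13_5, br_c13_6, dot, e, Pi.single_apply, vec7_0, vec7_1, vec7_2, vec7_3, vec7_4, vec7_5, vec7_6]
  · linear_combination ((-1/2827442 : ℝ) * x 0) * hs1 + ((-1/1682 : ℝ) * x 0) * hs2 + ((-9/31769138312 : ℝ) * x 0) * hs3 + ((-1/18898952 : ℝ) * x 0) * hs4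
  · linear_combination ((-1/2827442 : ℝ) * x 1) * hs1 + ((-2/1413721 : ℝ) * x 1) * hs4 + ((-1/18898952 : ℝ) * x 1) * hs5 + ((-9/18898952 : ℝ) * x 1) * hs6
  · linear_combination ((1/2827442 : ℝ) * x 2) * hs1 + ((-1/1682 : ℝ) * x 2) * hs2 + ((-1/18898952 : ℝ) * x 2) * hs5 + ((-9/18898952 : ℝ) * x 2) * hs6 + ((-18/1413721 : ℝ) * x 2) * hs7
  · linear_combination ((1/1682 : ℝ) * x 3) * hs2 + ((-9/31769138312 : ℝ) * x 3) * hs3 + ((-1/18898952 : ℝ) * x 3) * hs4 + ((-18/1413721 : ℝ) * x 3) * hs7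
  · linear_combination ((9/31769138312 : ℝ) * x 4) * hs3 + ((-2/1413721 : ℝ) * x 4) * hs4 + ((1/18898952 : ℝ) * x 4) * hs5 + ((-3/774857032 : ℝ) * x 5) * hp2
  · linear_combination ((1/18898952 : ℝ) * x 5) * hs4 + ((9/18898952 : ℝ) * x 5) * hs6 + ((-3/774857032 : ℝ) * x 4) * hp2
  · linear_combination ((2/1413721 : ℝ) * x 6) * hs4 + ((18/1413721 : ℝ) * x 6) * hs7

/-- The bracket satisfies the Jacobi identity (and is skew-symmetric),
`D` is a derivation of it, and the unnormalized moment map `m(μ̃)` — i.e. the endomorphism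
`m` of `ℝ⁷` determined by
`⟨m x, y⟩ = -2 ∑ᵢⱼ ⟨μ̃(x,eᵢ),eⱼ⟩⟨μ̃(y,eᵢ),eⱼ⟩ + ∑ᵢⱼ ⟨μ̃(eᵢ,eⱼ),x⟩⟨μ̃(eᵢ,eⱼ),y⟩` —
equals `-(43/58) • Id + 9/58 • D`, which is the indicated diagonal map. -/
theorem stmt :
    Skew c13 ∧ Jacobi c13 ∧
    diagL ![1, 2, 3, 4, 5, 5, 7] ∈ derivations c13 ∧
    ∀ m : Module.End ℝ V7,
      (∀ x y : V7, dot (m x) y =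
          -2 * ∑ i, ∑ j, dot (br c13 x (e i)) (e j) * dot (br c13 y (e i)) (e j)
          + ∑ i, ∑ j, dot (br c13 (e i) (e j)) x * dot (br c13 (e i) (e j)) y) →
      m = (-(43/58) : ℝ) • (1 : Module.End ℝ V7) + (9/58 : ℝ) • diagL ![1, 2, 3, 4, 5, 5, 7]
      ∧ m = diagL ![-17/29, -25/58, -8/29, -7/58, 1/29, 1/29, 10/29] := by
  refine ⟨skew13, jacobi13, deriv13, fun m hm => ?_⟩
  have h2 := mdiag m hm
  have hEq : ((-(43/58) : ℝ) • (1 : Module.End ℝ V7)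
      + (9/58 : ℝ) • diagL ![1, 2, 3, 4, 5, 5, 7])
      = diagL ![-17/29, -25/58, -8/29, -7/58, 1/29, 1/29, 10/29] := by
    apply LinearMap.ext
    intro x
    funext k
    fin_cases k <;>
      simp only [mk0, mk1, mk2, mk3, mk4, mk5, mk6, LinearMap.add_apply, LinearMap.smul_apply, Module.End.one_apply,
        Pi.add_apply, Pi.smul_apply, smul_eq_mul, dla, vec7_0, vec7_1, vec7_2, vec7_3, vec7_4,
        vec7_5, vec7_6] <;> ring
  exact ⟨h2.trans hEq.symm, h2⟩
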